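/- For all natural numbers d ≤ n and s ≥ 1, (n + 1) · ∑_{i=0}^{s} C(d, i) ≤ (d + 1) · ∑_{i=0}^{s} C(n, i). -/
import Mathlib

private lemma key_step (n s : ℕ) (hs : 1 ≤ s) :
    (n + 2) * ∑ i ∈ Finset.range (s + 1), n.choose i ≤
      (n + 1) * ∑ i ∈ Finset.range (s + 1), (n + 1).choose i := by
  obtain ⟨t, rfl⟩ := Nat.exists_eq_add_of_le hs
  set A := ∑ i ∈ Finset.range (1 + t + 1), n.choose i with hA
  set B := ∑ i ∈ Finset.range (1 + t), n.choose i with hB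
  have hS : ∑ i ∈ Finset.range (1 + t + 1), (n + 1).choose i = A + B := by
    rw [Finset.sum_range_succ' (fun i => (n+1).choose i), hA,
        Finset.sum_range_succ' (fun i => n.choose i)]
    simp only [Nat.choose_succ_succ, Finset.sum_add_distrib, Nat.choose_zero_right, Nat.succ_eq_add_one]
    omega
  have hAB : A = B + n.choose (1 + t) := by
    rw [hA, Finset.sum_range_succ]
  -- C(n, t+1) ≤ n * C(n, t) ≤ n * B
  have h1 : n.choose (t + 1) * (t + 1) = n.choose t * (n - t) := Nat.choose_succ_right_eq n t
  have h2 : n.choose (t + 1) ≤ n * n.choose t := by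
    have : n.choose (t + 1) * (t + 1) ≤ n.choose t * n :=
      h1 ▸ Nat.mul_le_mul_left _ (Nat.sub_le n t)
    nlinarith [Nat.le_mul_of_pos_right (n.choose (t+1)) (Nat.succ_pos t)]
  have h3 : n.choose t ≤ B := by
    rw [hB]
    exact Finset.single_le_sum (f := fun i => n.choose i) (fun i _ => Nat.zero_le _)
      (Finset.mem_range.mpr (by omega))
  have h4 : n.choose (1 + t) ≤ n * B := by
    rw [Nat.add_comm 1 t]
    calc n.choose (t + 1) ≤ n * n.choose t := h2
      _ ≤ n * B := Nat.mul_le_mul_left n h3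
  rw [hS]
  nlinarith [hAB]

/-- For all natural numbers `d ≤ n` and `s ≥ 1`,
`(n + 1) · ∑_{i=0}^{s} C(d, i) ≤ (d + 1) · ∑_{i=0}^{s} C(n, i)`. -/
theorem stmt_10 (n d s : ℕ) (hdn : d ≤ n) (hs : 1 ≤ s) :
    (n + 1) * ∑ i ∈ Finset.range (s + 1), d.choose i ≤
      (d + 1) * ∑ i ∈ Finset.range (s + 1), n.choose i := by
  induction n, hdn using Nat.le_induction with
  | base => rw [Nat.mul_comm]
  | succ n hdn ih =>
    have hk := key_step n s hs
    have : (n + 1) * ((n + 2) * ∑ i ∈ Finset.range (s + 1), d.choose i) ≤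
        (n + 1) * ((d + 1) * ∑ i ∈ Finset.range (s + 1), (n + 1).choose i) := by
      calc (n + 1) * ((n + 2) * ∑ i ∈ Finset.range (s + 1), d.choose i)
          = (n + 2) * ((n + 1) * ∑ i ∈ Finset.range (s + 1), d.choose i) := by ring
        _ ≤ (n + 2) * ((d + 1) * ∑ i ∈ Finset.range (s + 1), n.choose i) :=
            Nat.mul_le_mul_left _ ih
        _ = (d + 1) * ((n + 2) * ∑ i ∈ Finset.range (s + 1), n.choose i) := by ring
        _ ≤ (d + 1) * ((n + 1) * ∑ i ∈ Finset.range (s + 1), (n + 1).choose i) :=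
            Nat.mul_le_mul_left _ hk
        _ = (n + 1) * ((d + 1) * ∑ i ∈ Finset.range (s + 1), (n + 1).choose i) := by ring
    exact Nat.le_of_mul_le_mul_left this (Nat.succ_pos n)
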